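/- Let n ≥ 1 and let h : Fin (n+1) → ℝ be strictly monotone with h(0) = 0 and h(n) = T. Let δ > 0 and α ∈ ℝ, let μ̂, θ̂ : Fin n → ℝ, and let X be a Finset of events where each event x carries a time t(x) ∈ ℝ and a weight w(x) ∈ ℝ. Define λ : ℝ → ℝ so that for each i ∈ {1, …, n} and each z ∈ (h(i−1), h(i)], λ(z) = μ̂(i) + α · θ̂(i) · Σ_{x∈X, t(x) ≤ h(i−1)} w(x) · Real.exp (−δ · (z − t(x))). Then the interval integral ∫_0^T λ(z) dz equals Σ_{i=1}^{n} [ μ̂(i) · (h(i) − h(i−1)) + (α/δ) · θ̂(i) · Σ_{x∈X, t(x) ≤ h(i−1)} w(x) · (Real.exp (−δ · (h(i−1) − t(x))) − Real.exp (−δ · (h(i) − t(x)))) ]. -/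

import Mathlib

open MeasureTheory intervalIntegral

lemma exp_aux (δ : ℝ) (hδ : 0 < δ) (a b c : ℝ) :
    ∫ z in a..b, Real.exp (-δ * (z - c)) =
      (Real.exp (-δ * (a - c)) - Real.exp (-δ * (b - c))) / δ := by
  have hd : ∀ z : ℝ, HasDerivAt (fun z => -Real.exp (-δ * (z - c)) / δ)
      (Real.exp (-δ * (z - c))) z := by
    intro z
    have h1 : HasDerivAt (fun z : ℝ => -δ * (z - c)) (-δ) z := by
      simpa using ((hasDerivAt_id z).sub_const c).const_mul (-δ)
    have h3 := (h1.exp.neg).div_const δ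
    have h4 : Real.exp (-δ * (z - c)) = -(Real.exp (-δ * (z - c)) * -δ) / δ := by
      rw [eq_div_iff hδ.ne']; ring
    rw [h4]; exact h3
  have hcont : IntervalIntegrable (fun z => Real.exp (-δ * (z - c))) volume a b :=
    (Real.continuous_exp.comp (continuous_const.mul (continuous_id.sub continuous_const))).intervalIntegrable a b
  rw [intervalIntegral.integral_eq_sub_of_hasDerivAt (fun z _ => hd z) hcont]
  ring

/-- Proposition A.2: closed form of the compensator integral `∫_0^T λ(z) dz` when the
baseline rate and the connectivity are left-continuous step functions whose
discontinuities coincide with the event times `h 0 = 0 < h 1 < … < h n = T`, and the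
temporal kernel is exponential with rate `δ > 0`. -/
theorem stmt_12 {E : Type*} [DecidableEq E] (n : ℕ) (hn : 1 ≤ n)
    (h : Fin (n + 1) → ℝ) (hmono : StrictMono h) (T : ℝ)
    (h0 : h 0 = 0) (hT : h (Fin.last n) = T)
    (δ : ℝ) (hδ : 0 < δ) (α : ℝ) (μhat θhat : Fin n → ℝ)
    (X : Finset E) (t w : E → ℝ)
    (lam : ℝ → ℝ)
    (hlam : ∀ i : Fin n, ∀ z ∈ Set.Ioc (h i.castSucc) (h i.succ),
      lam z = μhat i + α * θhat i *
        ∑ x ∈ X.filter (fun x => t x ≤ h i.castSucc),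
          w x * Real.exp (-δ * (z - t x))) :
    ∫ z in (0 : ℝ)..T, lam z =
      ∑ i : Fin n,
        (μhat i * (h i.succ - h i.castSucc) +
          (α / δ) * θhat i *
            ∑ x ∈ X.filter (fun x => t x ≤ h i.castSucc),
              w x * (Real.exp (-δ * (h i.castSucc - t x)) -
                Real.exp (-δ * (h i.succ - t x)))) := by
  classical
  -- the continuous model function on each interval
  set F : Fin n → ℝ → ℝ := fun i z =>
    μhat i + α * θhat i *
      ∑ x ∈ X.filter (fun x => t x ≤ h i.castSucc), w x * Real.exp (-δ * (z - t x)) with hF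
  have hFcont : ∀ i : Fin n, Continuous (F i) := by
    intro i
    apply continuous_const.add
    apply continuous_const.mul
    apply continuous_finset_sum
    intro x _
    exact continuous_const.mul (Real.continuous_exp.comp (continuous_const.mul (continuous_id.sub continuous_const)))
  have hlt : ∀ i : Fin n, h i.castSucc < h i.succ := fun i => hmono Fin.castSucc_lt_succ
  -- each interval integral of lam equals that of F i
  have key : ∀ i : Fin n,
      ∫ z in (h i.castSucc)..(h i.succ), lam z =
        μhat i * (h i.succ - h i.castSucc) +
          (α / δ) * θhat i *
            ∑ x ∈ X.filter (fun x => t x ≤ h i.castSucc),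
              w x * (Real.exp (-δ * (h i.castSucc - t x)) -
                Real.exp (-δ * (h i.succ - t x))) := by
    intro i
    have hab := (hlt i).le
    have hcongr : ∫ z in (h i.castSucc)..(h i.succ), lam z
        = ∫ z in (h i.castSucc)..(h i.succ), F i z := by
      rw [intervalIntegral.integral_of_le hab, intervalIntegral.integral_of_le hab]
      exact setIntegral_congr_fun measurableSet_Ioc (fun z hz => hlam i z hz)
    rw [hcongr]
    have hint : ∀ x : E, IntervalIntegrable (fun z => w x * Real.exp (-δ * (z - t x)))
        volume (h i.castSucc) (h i.succ) :=
      fun x => (continuous_const.mul (Real.continuous_exp.comp (continuous_const.mul (continuous_id.sub continuous_const)))).intervalIntegrable _ _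
    have hsumint : IntervalIntegrable
        (fun z => ∑ x ∈ X.filter (fun x => t x ≤ h i.castSucc),
          w x * Real.exp (-δ * (z - t x))) volume (h i.castSucc) (h i.succ) := by
      apply Continuous.intervalIntegrable
      exact continuous_finset_sum _ (fun x _ =>
        continuous_const.mul (Real.continuous_exp.comp
          (continuous_const.mul (continuous_id.sub continuous_const))))
    have := intervalIntegral.integral_add
      (_root_.intervalIntegrable_const (c := μhat i)) (hsumint.const_mul (α * θhat i))
    simp only [hF]
    rw [this, intervalIntegral.integral_const, intervalIntegral.integral_const_mul,
      intervalIntegral.integral_finset_sum (fun x _ => hint x)]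
    have hterm : ∀ x : E, (∫ z in (h i.castSucc)..(h i.succ),
        w x * Real.exp (-δ * (z - t x))) =
        w x * ((Real.exp (-δ * (h i.castSucc - t x)) -
          Real.exp (-δ * (h i.succ - t x))) / δ) := by
      intro x
      rw [intervalIntegral.integral_const_mul, exp_aux δ hδ]
    rw [Finset.sum_congr rfl (fun x _ => hterm x)]
    have hsum : ∑ x ∈ X.filter (fun x => t x ≤ h i.castSucc),
        w x * ((Real.exp (-δ * (h i.castSucc - t x)) -
          Real.exp (-δ * (h i.succ - t x))) / δ)
        = (∑ x ∈ X.filter (fun x => t x ≤ h i.castSucc),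
          w x * (Real.exp (-δ * (h i.castSucc - t x)) -
            Real.exp (-δ * (h i.succ - t x)))) / δ := by
      rw [Finset.sum_div]
      exact Finset.sum_congr rfl (fun x _ => by ring)
    rw [hsum]
    simp only [smul_eq_mul]
    ring
  -- integrability of lam on each interval
  have hlamint : ∀ i : Fin n, IntervalIntegrable lam volume (h i.castSucc) (h i.succ) := by
    intro i
    rw [intervalIntegrable_iff_integrableOn_Ioc_of_le (hlt i).le]
    exact (((hFcont i).integrableOn_Ioc).congr_fun
      (fun z hz => (hlam i z hz).symm) measurableSet_Ioc)
  -- glue with sum of adjacent intervals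
  set a : ℕ → ℝ := fun k => if hk : k ≤ n then h ⟨k, by omega⟩ else h (Fin.last n) with ha
  have hak : ∀ k : ℕ, (hk : k ≤ n) → a k = h ⟨k, by omega⟩ := by
    intro k hk; simp [ha, hk]
  have hsplit : ∑ k ∈ Finset.range n, ∫ z in (a k)..(a (k + 1)), lam z
      = ∫ z in (a 0)..(a n), lam z := by
    apply intervalIntegral.sum_integral_adjacent_intervals
    intro k hk
    have h1 : a k = h (⟨k, by omega⟩ : Fin n).castSucc := by
      rw [hak k (by omega)]; rfl
    have h2 : a (k + 1) = h (⟨k, by omega⟩ : Fin n).succ := by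
      rw [hak (k + 1) (by omega)]; rfl
    rw [h1, h2]
    exact hlamint ⟨k, by omega⟩
  have ha0 : a 0 = 0 := by rw [hak 0 (by omega)]; simpa using h0
  have han : a n = T := by rw [hak n le_rfl]; simpa [Fin.last] using hT
  rw [← ha0, ← han] at *
  rw [← hsplit, ← Fin.sum_univ_eq_sum_range (fun k => ∫ z in (a k)..(a (k + 1)), lam z)]
  apply Finset.sum_congr rfl
  intro i _
  have h1 : a (i : ℕ) = h i.castSucc := by rw [hak i (by omega)]; rfl
  have h2 : a ((i : ℕ) + 1) = h i.succ := by rw [hak ((i : ℕ) + 1) (by omega)]; rfl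
  rw [h1, h2, key i]
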